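/- An irregular Diophantine quadruple (a,b,c,d) of positive integers with a < b < c < d exists if and only if there exist positive integers a', b', c' (all less than d) such that (a, b, c', d), (a, b', c, d), and (a', b, c, d) are three distinct regular Diophantine quadruples. -/
import Mathlib

def P (a b c d : ℤ) : ℤ := a^2 + b^2 + c^2 + d^2 - 2*a*b - 2*a*c - 2*a*d - 2*b*c - 2*b*d - 2*c*d - 4*a*b*c*d - 4

def DiophQuad (a b c d : ℤ) : Prop :=
  IsSquare (a*b+1) ∧ IsSquare (a*c+1) ∧ IsSquare (a*d+1) ∧
  IsSquare (b*c+1) ∧ IsSquare (b*d+1) ∧ IsSquare (c*d+1)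

lemma lt_of_sq_lt {A B : ℤ} (hA : 0 ≤ A) (hB : 0 ≤ B) (h : A*A < B*B) : A < B := by
  by_contra hc; push_neg at hc; nlinarith

lemma getRoot {n : ℤ} (h : IsSquare n) : ∃ r : ℤ, 0 ≤ r ∧ r * r = n := by
  obtain ⟨k, hk⟩ := h
  exact ⟨|k|, abs_nonneg k, by rw [abs_mul_abs_self]; exact hk.symm⟩

lemma gap2 {a b r : ℤ} (ha : 0 < a) (hab : a < b) (hr : 0 ≤ r) (hr2 : r*r = a*b+1) :
    a + 2 ≤ b := by
  by_contra h
  have hb : b = a + 1 := by omega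
  subst hb
  have h1 : a < r := lt_of_sq_lt ha.le hr (by nlinarith)
  have h2 : r < a + 1 := lt_of_sq_lt hr (by linarith) (by nlinarith)
  omega

lemma pair_gap {a b x r p q : ℤ} (ha : 0 < a) (hab : a < b) (hbx : b < x)
    (hr : 0 ≤ r) (hr2 : r * r = a * b + 1)
    (hp : 0 ≤ p) (hp2 : p * p = a * x + 1)
    (hq : 0 ≤ q) (hq2 : q * q = b * x + 1) : a + b + 2 * r ≤ x := by
  have hb : 0 < b := ha.trans hab
  have hx : 0 < x := hb.trans hbx
  have hr1 : 2 ≤ r := by nlinarith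
  have ht : (p*q)*(p*q) = (a*x+1)*(b*x+1) := by
    linear_combination (q*q)*hp2 + (a*x+1)*hq2
  have hy : (r*x)*(r*x) = (a*b+1)*(x*x) := by
    linear_combination (x*x)*hr2
  have htn : 0 ≤ p*q := mul_nonneg hp hq
  have hyn : 0 ≤ r*x := mul_nonneg hr hx.le
  rcases lt_trichotomy x (a+b) with h | h | h
  · exfalso
    have h1 : r*x < p*q := lt_of_sq_lt hyn htn (by nlinarith)
    have h2 : r*x + 1 ≤ p*q := h1
    have h3 : (r*x+1)*(r*x+1) ≤ (p*q)*(p*q) :=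
      mul_le_mul h2 h2 (by linarith) htn
    have h4 : x + 2*r ≤ a + b := by
      have h5 : (x + 2*r)*x ≤ (a+b)*x := by nlinarith
      exact le_of_mul_le_mul_right h5 hx
    have h6 : 2*r < a := by linarith
    have h7 : (2*r)*(2*r) < a*a := mul_self_lt_mul_self (by linarith) h6
    have h8 : a*a < a*b := mul_lt_mul_of_pos_left hab ha
    have h9 : 0 < a*b := mul_pos ha hb
    linarith
  · exfalso
    have h1 : (p*q)*(p*q) = (r*x)*(r*x) + 1 := by
      rw [ht, hy]; subst h; ring
    have h2 : r*x < p*q := lt_of_sq_lt hyn htn (by linarith)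
    have h3 : r*x + 1 ≤ p*q := h2
    have h4 : (r*x+1)*(r*x+1) ≤ (p*q)*(p*q) :=
      mul_le_mul h3 h3 (by linarith) htn
    have h2x : 2*x ≤ r*x := mul_le_mul_of_nonneg_right hr1 hx.le
    nlinarith [h4, h1, h2x, hx]
  · have h2x : 2*x ≤ r*x := mul_le_mul_of_nonneg_right hr1 hx.le
    have h1 : p*q < r*x := lt_of_sq_lt htn hyn (by nlinarith)
    have h2 : p*q ≤ r*x - 1 := by linarith
    have h3 : (p*q)*(p*q) ≤ (r*x-1)*(r*x-1) :=
      mul_le_mul h2 h2 htn (by linarith)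
    have h5 : (a + b + 2*r)*x ≤ x*x := by nlinarith [h3, ht, hy]
    exact le_of_mul_le_mul_right h5 hx

lemma ext_main (A B D r q v : ℤ) (hA : 0 < A) (hAB : A < B) (hBD : B < D)
    (hr : 0 ≤ r) (hq : 0 ≤ q) (hv : 0 ≤ v)
    (hr2 : r*r = A*B+1) (hq2 : q*q = A*D+1) (hv2 : v*v = B*D+1)
    (hgap : A + B + 2*r + 1 ≤ D) :
    0 < A+B+D+2*A*B*D - 2*(r*q*v) ∧ A+B+D+2*A*B*D - 2*(r*q*v) < D ∧
    A*(A+B+D+2*A*B*D - 2*(r*q*v))+1 = (q*r - A*v)*(q*r - A*v) ∧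
    B*(A+B+D+2*A*B*D - 2*(r*q*v))+1 = (r*v - B*q)*(r*v - B*q) ∧
    D*(A+B+D+2*A*B*D - 2*(r*q*v))+1 = (q*v - D*r)*(q*v - D*r) ∧
    P A B (A+B+D+2*A*B*D - 2*(r*q*v)) D = 0 := by
  have hB : 0 < B := hA.trans hAB
  have hD : 0 < D := hB.trans hBD
  have key : (A+B+D+2*A*B*D - 2*(r*q*v)) * (A+B+D+2*A*B*D + 2*(r*q*v))
      = (D-A-B)*(D-A-B) - 4*(A*B+1) := by
    linear_combination (-4*q*q*v*v)*hr2 + (-4*(A*B+1)*v*v)*hq2 + (-4*(A*B+1)*(A*D+1))*hv2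
  have h5 : 2*r+1 ≤ D-A-B := by linarith
  have h6 : (2*r+1)*(2*r+1) ≤ (D-A-B)*(D-A-B) := mul_le_mul h5 h5 (by linarith) (by linarith)
  have hK : 0 < (D-A-B)*(D-A-B) - 4*(A*B+1) := by nlinarith [h6, hr2]
  have hrqv : 0 ≤ r*q*v := by positivity
  have hABD : 0 < A*B*D := by positivity
  have hMpos : D < A+B+D+2*A*B*D + 2*(r*q*v) := by nlinarith
  have hXpos : 0 < A+B+D+2*A*B*D - 2*(r*q*v) := by
    by_contra hc
    push_neg at hc
    have h7 : (A+B+D+2*A*B*D - 2*(r*q*v)) * (A+B+D+2*A*B*D + 2*(r*q*v)) ≤ 0 :=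
      mul_nonpos_of_nonpos_of_nonneg hc (by linarith)
    linarith
  have hXlt : A+B+D+2*A*B*D - 2*(r*q*v) < D := by
    by_contra hc
    push_neg at hc
    have h8 : D * (A+B+D+2*A*B*D + 2*(r*q*v)) ≤
        (A+B+D+2*A*B*D - 2*(r*q*v)) * (A+B+D+2*A*B*D + 2*(r*q*v)) :=
      mul_le_mul_of_nonneg_right hc (by linarith)
    have h9 : (D-A-B)*(D-A-B) - 4*(A*B+1) < D * (A+B+D+2*A*B*D + 2*(r*q*v)) := by
      nlinarith [h6, hMpos]
    linarith
  refine ⟨hXpos, hXlt, ?_, ?_, ?_, ?_⟩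
  · linear_combination (-(q*q))*hr2 + (-(A*B+1))*hq2 + (-(A*A))*hv2
  · linear_combination (-(v*v))*hr2 + (-(B*B))*hq2 + (-(A*B+1))*hv2
  · linear_combination (-(D*D))*hr2 + (-(v*v))*hq2 + (-(A*D+1))*hv2
  · unfold P
    linear_combination (4*q*q*v*v)*hr2 + (4*(A*B+1)*v*v)*hq2 + (4*(A*B+1)*(A*D+1))*hv2

set_option maxHeartbeats 2000000 in
theorem stmt_19 :
    (∃ a b c d : ℤ, 0 < a ∧ a < b ∧ b < c ∧ c < d ∧ DiophQuad a b c d ∧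
        P a b c d ≠ 0) ↔
    (∃ a b c d a' b' c' : ℤ, 0 < a ∧ a < b ∧ b < c ∧ c < d ∧
        0 < a' ∧ a' < d ∧ 0 < b' ∧ b' < d ∧ 0 < c' ∧ c' < d ∧
        DiophQuad a b c' d ∧ P a b c' d = 0 ∧
        DiophQuad a b' c d ∧ P a b' c d = 0 ∧
        DiophQuad a' b c d ∧ P a' b c d = 0 ∧
        (a, b, c') ≠ (a, b', c) ∧ (a, b, c') ≠ (a', b, c) ∧ (a, b', c) ≠ (a', b, c)) := by
  constructor
  · rintro ⟨a, b, c, d, ha, hab, hbc, hcd, ⟨h1, h2, h3, h4, h5, h6⟩, hP⟩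
    obtain ⟨r, hr0, hr2⟩ := getRoot h1
    obtain ⟨s, hs0, hs2⟩ := getRoot h2
    obtain ⟨q, hq0, hq2⟩ := getRoot h3
    obtain ⟨u, hu0, hu2⟩ := getRoot h4
    obtain ⟨v, hv0, hv2⟩ := getRoot h5
    obtain ⟨w, hw0, hw2⟩ := getRoot h6
    have hb : 0 < b := ha.trans hab
    have hc : 0 < c := hb.trans hbc
    have hd : 0 < d := hc.trans hcd
    have hb2 : a + 2 ≤ b := gap2 ha hab hr0 hr2
    have gc : a + b + 2*r ≤ c := pair_gap ha hab hbc hr0 hr2 hs0 hs2 hu0 hu2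
    have gd_bc : b + c + 2*u ≤ d := pair_gap hb hbc hcd hu0 hu2 hv0 hv2 hw0 hw2
    have hus : s < u := lt_of_sq_lt hs0 hu0
      (by nlinarith [mul_lt_mul_of_pos_right hab hc])
    -- strict gap for the triple (b,c,d)
    have gd_bc1 : b + c + 2*u + 1 ≤ d := by
      rcases gd_bc.lt_or_eq with hlt | heq
      · omega
      · exfalso
        subst heq
        have hqq : q*q = r*r + s*s + 2*(a*u) - 1 := by
          linear_combination hq2 - hr2 - hs2
        have hab3 : 3 ≤ a*b := by nlinarith
        have hac4 : 4 ≤ a*c := by nlinarith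
        have hr3 : 2 ≤ r := by nlinarith
        have hs3 : 3 ≤ s := by nlinarith
        have e1 : (r*s)*(r*s) = (a*b+1)*(a*c+1) := by
          linear_combination (s*s)*hr2 + (a*b+1)*hs2
        have e2 : (a*u)*(a*u) = (a*a)*(b*c+1) := by
          linear_combination (a*a)*hu2
        have hau0 : 0 ≤ a*u := mul_nonneg ha.le hu0
        have h1au : a*u < r*s := lt_of_sq_lt hau0 (mul_nonneg hr0 hs0) (by
          rw [e1, e2]
          nlinarith [mul_lt_mul_of_pos_left hab ha, mul_pos ha hc])
        have hD : (r*s - a*u)*(r*s + a*u) = a*b + a*c + 1 - a*a := by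
          linear_combination e1 - e2
        have hstep : (r*r) + (s*s) ≤ (r+s-2)*(r*s) := by
          nlinarith [mul_nonneg (by linarith : (0:ℤ) ≤ s - 3) (mul_self_nonneg r),
            mul_nonneg (by linarith : (0:ℤ) ≤ r - 2) (mul_self_nonneg s),
            mul_self_nonneg (r-s), mul_self_nonneg r]
        have hbound : (r*s - a*u)*(r*s + a*u) ≤ (r+s-2)*(r*s + a*u) := by
          have hx1 : 0 ≤ (r+s-2)*(a*u) := mul_nonneg (by linarith) hau0
          nlinarith [hstep, hr2, hs2, mul_pos ha ha]
        have h2rs : r*s - a*u ≤ r + s - 2 :=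
          le_of_mul_le_mul_right hbound (by nlinarith [h1au, hau0])
        have hqlt : q < r + s := lt_of_sq_lt hq0 (by linarith)
          (by nlinarith [hqq, h1au])
        have hqgt : r + s - 1 < q := lt_of_sq_lt (by linarith) hq0
          (by nlinarith [hqq, h2rs])
        omega
    have gap1 : a + b + 2*r + 1 ≤ d := by linarith
    have gap2' : a + c + 2*s + 1 ≤ d := by linarith
    obtain ⟨hc'pos, hc'lt, hE1a, hE1b, hE1d, hE1P⟩ :=
      ext_main a b d r q v ha hab (hbc.trans hcd) hr0 hq0 hv0 hr2 hq2 hv2 gap1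
    obtain ⟨hb'pos, hb'lt, hE2a, hE2b, hE2d, hE2P⟩ :=
      ext_main a c d s q w ha (hab.trans hbc) hcd hs0 hq0 hw0 hs2 hq2 hw2 gap2'
    obtain ⟨ha'pos, ha'lt, hE3a, hE3b, hE3d, hE3P⟩ :=
      ext_main b c d u v w hb hbc hcd hu0 hv0 hw0 hu2 hv2 hw2 gd_bc1
    set c' := a+b+d+2*a*b*d - 2*(r*q*v) with hc'def
    set b' := a+c+d+2*a*c*d - 2*(s*q*w) with hb'def
    set a' := b+c+d+2*b*c*d - 2*(u*v*w) with ha'def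
    clear_value c' b' a'
    have hP2 : P a b' c d = 0 := by
      have : P a b' c d = P a c b' d := by unfold P; ring
      rw [this]; exact hE2P
    have hP3 : P a' b c d = 0 := by
      have : P a' b c d = P b c a' d := by unfold P; ring
      rw [this]; exact hE3P
    have hcc : c' ≠ c := by
      intro h
      exact hP (by rw [← h]; exact hE1P)
    have hbb : b' ≠ b := by
      intro h
      exact hP (by rw [← h]; exact hP2)
    refine ⟨a, b, c, d, a', b', c', ha, hab, hbc, hcd, ha'pos, ha'lt, hb'pos, hb'lt,
      hc'pos, hc'lt, ⟨h1, ⟨_, hE1a⟩, h3, ⟨_, hE1b⟩, h5, ⟨q*v - d*r, by linear_combination hE1d⟩⟩,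
      hE1P,
      ⟨⟨_, hE2a⟩, h2, h3, ⟨s*w - c*q, by linear_combination hE2b⟩, ⟨q*w - d*s, by linear_combination hE2d⟩, h6⟩,
      hP2,
      ⟨⟨v*u - b*w, by linear_combination hE3a⟩, ⟨u*w - c*v, by linear_combination hE3b⟩,
        ⟨v*w - d*u, by linear_combination hE3d⟩, h4, h5, h6⟩,
      hP3, ?_, ?_, ?_⟩
    · intro h
      rw [Prod.mk.injEq, Prod.mk.injEq] at h
      exact hcc h.2.2
    · intro h
      rw [Prod.mk.injEq, Prod.mk.injEq] at h
      exact hcc h.2.2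
    · intro h
      rw [Prod.mk.injEq, Prod.mk.injEq] at h
      exact hbb h.2.1
  · rintro ⟨a, b, c, d, a', b', c', ha, hab, hbc, hcd, ha'p, ha'd, hb'p, hb'd, hc'p, hc'd,
      DQ1, HP1, DQ2, HP2, DQ3, HP3, t1, t2, t3⟩
    refine ⟨a, b, c, d, ha, hab, hbc, hcd,
      ⟨DQ1.1, DQ2.2.1, DQ1.2.2.1, DQ3.2.2.2.1, DQ1.2.2.2.2.1, DQ2.2.2.2.2.2⟩, ?_⟩
    intro hP0
    have hb : 0 < b := ha.trans hab
    have hc : 0 < c := hb.trans hbc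
    have hd : 0 < d := hc.trans hcd
    have habd : 0 < a*b*d := mul_pos (mul_pos ha hb) hd
    have hacd : 0 < a*c*d := mul_pos (mul_pos ha hc) hd
    have fc : (c - c')*(c + c' - 2*(a+b+d+2*a*b*d)) = 0 := by
      unfold P at hP0 HP1
      linear_combination hP0 - HP1
    have fb : (b - b')*(b + b' - 2*(a+c+d+2*a*c*d)) = 0 := by
      unfold P at hP0 HP2
      linear_combination hP0 - HP2
    have hcc : c = c' := by
      rcases mul_eq_zero.1 fc with h | h
      · linarith
      · exfalso; nlinarith
    have hbb : b = b' := by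
      rcases mul_eq_zero.1 fb with h | h
      · linarith
      · exfalso; nlinarith
    exact t1 (by rw [hbb, hcc])
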